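/- Solution formula for the inhomogeneous right-sided fractional equation (equation (19) solves equation (18) of the paper): let 0 < α < 1, l > 0, k ∈ ℝ, and let b, c be real constants. Define φ(s) := c·(l−s)^{α−1} E_{α,α}(k(l−s)^α) + b·l^{α−2} ∫_s^l (t−s)^{α−1} E_{α,α}(k(t−s)^α)·(l−t)^{1−α} dt for s ∈ (0,l), where E_{α,α}(z) := Σ_{n=0}^∞ z^n / Γ(αn + α). Then for every s ∈ (0,l), (D_{l−}^α φ)(s) − k φ(s) = b·l^{α−2}·(l−s)^{1−α}. -/

import Mathlib

open MeasureTheory Set Filter Topology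

/-- Left Riemann–Liouville fractional integral of order `α` based at `a` (real-valued). -/
noncomputable def RLIplusR (α a : ℝ) (f : ℝ → ℝ) (x : ℝ) : ℝ :=
  (1 / Real.Gamma α) * ∫ t in a..x, f t * (x - t) ^ (α - 1)

/-- Right Riemann–Liouville fractional integral of order `α` based at `b` (real-valued). -/
noncomputable def RLIminusR (α b : ℝ) (f : ℝ → ℝ) (x : ℝ) : ℝ :=
  (1 / Real.Gamma α) * ∫ t in x..b, f t * (t - x) ^ (α - 1)

/-- Left Riemann–Liouville fractional derivative of order `α` (`0 < α < 1`), real-valued. -/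
noncomputable def RLDplusR (α a : ℝ) (f : ℝ → ℝ) (x : ℝ) : ℝ :=
  deriv (RLIplusR (1 - α) a f) x

/-- Right Riemann–Liouville fractional derivative of order `α` (`0 < α < 1`), real-valued. -/
noncomputable def RLDminusR (α b : ℝ) (f : ℝ → ℝ) (x : ℝ) : ℝ :=
  - deriv (RLIminusR (1 - α) b f) x

/-- The two-parameter Mittag-Leffler function `E_{α,β}(x) = Σ_{n=0}^∞ xⁿ / Γ(αn + β)`
(real argument). -/
noncomputable def mittagLeffler (α β x : ℝ) : ℝ :=
  ∑' n : ℕ, x ^ n / Real.Gamma (α * n + β)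

section ML
variable {α β x : ℝ}

/-- log-convexity lower bound: `Γ(y) * (y+α-1)^α ≤ Γ(y+α)` for `y ≥ 1`, `0 < α ≤ 1`. -/
lemma gamma_ratio_lb (hα : 0 < α) (hα1 : α ≤ 1) {y : ℝ} (hy : 1 ≤ y) :
    Real.Gamma y * (y + α - 1) ^ α ≤ Real.Gamma (y + α) := by
  have h0 : (0:ℝ) < y + α - 1 := by linarith
  have h1 : (0:ℝ) < y + α := by linarith
  have h2 : (0:ℝ) < y := by linarith
  have hconv := Real.convexOn_log_Gamma.2 (mem_Ioi.mpr h1) (mem_Ioi.mpr h0)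
    (by linarith : (0:ℝ) ≤ 1 - α) hα.le (by ring)
  have hcomb : (1 - α) • (y + α) + α • (y + α - 1) = y := by
    simp only [smul_eq_mul]; ring
  rw [hcomb] at hconv
  simp only [smul_eq_mul, Function.comp_apply] at hconv
  have hGadd : Real.Gamma (y + α) = (y + α - 1) * Real.Gamma (y + α - 1) := by
    have := Real.Gamma_add_one (ne_of_gt h0)
    rw [show y + α - 1 + 1 = y + α by ring] at this
    exact this
  have hGpos : 0 < Real.Gamma (y + α) := Real.Gamma_pos_of_pos h1
  have hGpos0 : 0 < Real.Gamma (y + α - 1) := Real.Gamma_pos_of_pos h0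
  -- rewrite log Γ(y+α-1) = log Γ(y+α) - log (y+α-1)
  have hlog : Real.log (Real.Gamma (y + α - 1)) =
      Real.log (Real.Gamma (y + α)) - Real.log (y + α - 1) := by
    rw [hGadd, Real.log_mul (ne_of_gt h0) (ne_of_gt hGpos0)]; ring
  rw [hlog] at hconv
  have hconv2 : Real.log (Real.Gamma y) ≤ Real.log (Real.Gamma (y + α)) - α * Real.log (y + α - 1) := by
    nlinarith [hconv]
  have : Real.log (Real.Gamma y * (y + α - 1) ^ α) ≤ Real.log (Real.Gamma (y + α)) := by
    rw [Real.log_mul (ne_of_gt (Real.Gamma_pos_of_pos h2)) (ne_of_gt (Real.rpow_pos_of_pos h0 α)),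
      Real.log_rpow h0]
    linarith
  have := Real.exp_le_exp.mpr this
  rwa [Real.exp_log (by positivity), Real.exp_log hGpos] at this

/-- Summability of the Mittag-Leffler series. -/
lemma summable_ml (hα : 0 < α) (hα1 : α ≤ 1) (hβ : 0 < β) (x : ℝ) :
    Summable (fun n : ℕ => x ^ n / Real.Gamma (α * n + β)) := by
  have key : ∀ x : ℝ, 0 ≤ x → Summable (fun n : ℕ => x ^ n / Real.Gamma (α * n + β)) := by
    intro x hx
    rcases eq_or_lt_of_le hx with h0 | hxpos
    · apply summable_of_ne_finset_zero (s := {0})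
      intro n hn
      simp only [Finset.mem_singleton] at hn
      rw [← h0, zero_pow hn, zero_div]
    · -- ratio test
      have h1 : Tendsto (fun n : ℕ => α * n + β + α - 1) atTop atTop := by
        have := tendsto_atTop_add_const_right atTop (β + α - 1)
          ((tendsto_natCast_atTop_atTop (R := ℝ)).const_mul_atTop hα)
        exact this.congr (fun n => by ring)
      have hev : ∀ᶠ n : ℕ in atTop, 2 * x ≤ (α * n + β + α - 1) ^ α :=
        ((tendsto_rpow_atTop hα).comp h1).eventually_ge_atTop (2 * x)
      have hev2 : ∀ᶠ n : ℕ in atTop, 1 ≤ α * n + β :=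
        (tendsto_atTop_add_const_right _ β
          ((tendsto_natCast_atTop_atTop (R := ℝ)).const_mul_atTop hα)).eventually_ge_atTop 1
      apply summable_of_ratio_norm_eventually_le (r := 1/2) (by norm_num)
      filter_upwards [hev, hev2] with n h1 h2
      have hy1 : (0:ℝ) < α * n + β := by linarith
      have hgp : 0 < Real.Gamma (α * n + β) := Real.Gamma_pos_of_pos hy1
      have hgp2 : 0 < Real.Gamma (α * n + β + α) := Real.Gamma_pos_of_pos (by linarith)
      have hrat := gamma_ratio_lb hα hα1 h2
      have hstep : 2 * x * Real.Gamma (α * n + β) ≤ Real.Gamma (α * n + β + α) := by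
        calc 2 * x * Real.Gamma (α * n + β)
            ≤ (α * n + β + α - 1) ^ α * Real.Gamma (α * n + β) := by
              apply mul_le_mul_of_nonneg_right h1 hgp.le
          _ ≤ Real.Gamma (α * n + β + α) := by rw [mul_comm]; exact hrat
      have hcast : α * (n + 1 : ℕ) + β = α * n + β + α := by push_cast; ring
      rw [Real.norm_eq_abs, Real.norm_eq_abs, abs_div, abs_div, abs_pow, abs_pow,
        abs_of_pos hxpos, abs_of_pos hgp, hcast, abs_of_pos hgp2]
      rw [div_le_iff₀ hgp2]
      calc x ^ (n+1) = x ^ n / (2 * Real.Gamma (α * n + β)) * (2 * x * Real.Gamma (α * n + β)) := by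
            field_simp; ring
        _ ≤ x ^ n / (2 * Real.Gamma (α * n + β)) * Real.Gamma (α * n + β + α) :=
            mul_le_mul_of_nonneg_left hstep (by positivity)
        _ = 1 / 2 * (x ^ n / Real.Gamma (α * n + β)) * Real.Gamma (α * n + β + α) := by ring
  apply Summable.of_norm
  have := key |x| (abs_nonneg x)
  apply this.congr
  intro n
  rw [Real.norm_eq_abs, abs_div, abs_pow, abs_of_pos (Real.Gamma_pos_of_pos (by positivity))]

lemma ml_abs_le (hα : 0 < α) (hα1 : α ≤ 1) (hβ : 0 < β) {X : ℝ} (hX : |x| ≤ X) :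
    |mittagLeffler α β x| ≤ mittagLeffler α β X := by
  have hXnn : 0 ≤ X := le_trans (abs_nonneg x) hX
  unfold mittagLeffler
  have habs : ∀ n : ℕ, ‖x ^ n / Real.Gamma (α * n + β)‖ = |x| ^ n / Real.Gamma (α * n + β) := by
    intro n
    rw [Real.norm_eq_abs, abs_div, abs_pow, abs_of_pos (Real.Gamma_pos_of_pos (by positivity))]
  have hs : Summable (fun n : ℕ => ‖x ^ n / Real.Gamma (α * n + β)‖) :=
    (summable_ml hα hα1 hβ |x|).congr fun n => (habs n).symm
  calc |∑' n : ℕ, x ^ n / Real.Gamma (α * n + β)|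
      ≤ ∑' n : ℕ, ‖x ^ n / Real.Gamma (α * n + β)‖ := norm_tsum_le_tsum_norm hs
    _ = ∑' n : ℕ, |x| ^ n / Real.Gamma (α * n + β) := tsum_congr habs
    _ ≤ ∑' n : ℕ, X ^ n / Real.Gamma (α * n + β) := by
        apply Summable.tsum_le_tsum _ (summable_ml hα hα1 hβ |x|) (summable_ml hα hα1 hβ X)
        intro n
        gcongr

lemma continuous_ml (hα : 0 < α) (hα1 : α ≤ 1) (hβ : 0 < β) :
    Continuous (mittagLeffler α β) := by
  rw [continuous_iff_continuousAt]
  intro y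
  have hR : |y| < |y| + 1 := by linarith [abs_nonneg y]
  have hco : ContinuousOn (mittagLeffler α β) (Set.Ioo (-(|y|+1)) (|y|+1)) := by
    apply continuousOn_tsum (u := fun n : ℕ => (|y|+1) ^ n / Real.Gamma (α * n + β))
    · intro n; exact (continuous_pow n).continuousOn.div_const _
    · exact summable_ml hα hα1 hβ _
    · intro n z hz
      rw [Real.norm_eq_abs, abs_div, abs_pow, abs_of_pos (Real.Gamma_pos_of_pos (by positivity))]
      gcongr
      rw [abs_le]
      exact ⟨(hz.1).le.trans' (by linarith), hz.2.le⟩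
  exact hco.continuousAt (Ioo_mem_nhds (by cases abs_lt.mp hR with
    | intro h1 h2 => linarith [neg_abs_le y]) (lt_of_le_of_lt (le_abs_self y) hR))

lemma ml_one_shift (hα : 0 < α) (hα1 : α ≤ 1) (x : ℝ) :
    mittagLeffler α 1 x = 1 + x * mittagLeffler α (α+1) x := by
  unfold mittagLeffler
  rw [Summable.tsum_eq_zero_add (summable_ml hα hα1 one_pos x)]
  congr 1
  · norm_num [Real.Gamma_one]
  · rw [← tsum_mul_left]
    congr 1; funext n
    rw [pow_succ]
    have : α * (n + 1 : ℕ) + 1 = α * n + (α + 1) := by push_cast; ring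
    rw [this]; ring

section Beta
variable {p q a b : ℝ}

lemma measurable_rpowc (c : ℝ) : Measurable fun y : ℝ => y ^ c := by measurability

lemma measurable_sub_rpow (a c : ℝ) : Measurable fun t : ℝ => (t - a) ^ c :=
  (measurable_rpowc c).comp (measurable_id.sub_const a)

lemma measurable_const_sub_rpow (b c : ℝ) : Measurable fun t : ℝ => (b - t) ^ c :=
  (measurable_rpowc c).comp (measurable_const.sub measurable_id)

lemma measurable_betaKer (p q a b : ℝ) :
    Measurable (fun t : ℝ => (t - a) ^ (p-1) * (b - t) ^ (q-1)) :=
  (measurable_sub_rpow a (p-1)).mul (measurable_const_sub_rpow b (q-1))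

lemma intervalIntegrable_beta (hp : 0 < p) (hq : 0 < q) (hab : a < b) :
    IntervalIntegrable (fun t => (t - a) ^ (p-1) * (b - t) ^ (q-1)) volume a b := by
  set m := (a+b)/2 with hm
  have ham : a < m := by rw [hm]; linarith
  have hmb : m < b := by rw [hm]; linarith
  have h1 : IntervalIntegrable (fun t => (t - a) ^ (p-1) * (b - t) ^ (q-1)) volume a m := by
    rw [intervalIntegrable_iff_integrableOn_Ioc_of_le ham.le]
    set C := max ((b-a) ^ (q-1)) ((b-m) ^ (q-1)) with hC
    have hint : IntegrableOn (fun t => (t - a) ^ (p-1) * C) (Ioc a m) volume := by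
      have h0 : IntervalIntegrable (fun x : ℝ => x ^ (p-1)) volume 0 (m - a) :=
        intervalIntegral.intervalIntegrable_rpow' (by linarith)
      have h0' := (h0.comp_sub_right a).mul_const C
      rw [intervalIntegrable_iff_integrableOn_Ioc_of_le (by linarith)] at h0'
      simpa using h0'
    apply hint.integrable.mono' ((measurable_betaKer p q a b).aestronglyMeasurable)
    filter_upwards [ae_restrict_mem measurableSet_Ioc] with t ht
    have h1 : 0 < t - a := by linarith [ht.1]
    have h2 : 0 < b - t := by linarith [ht.2]
    rw [Real.norm_eq_abs, abs_of_nonneg (mul_nonneg (Real.rpow_nonneg h1.le _)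
      (Real.rpow_nonneg h2.le _))]
    apply mul_le_mul_of_nonneg_left _ (Real.rpow_nonneg h1.le _)
    rcases le_total 0 (q-1) with hq1 | hq1
    · exact le_max_of_le_left (Real.rpow_le_rpow h2.le (by linarith [ht.1]) hq1)
    · exact le_max_of_le_right (Real.rpow_le_rpow_of_nonpos (by linarith [ht.2])
        (by linarith [ht.2]) hq1)
  have h2 : IntervalIntegrable (fun t => (t - a) ^ (p-1) * (b - t) ^ (q-1)) volume m b := by
    rw [intervalIntegrable_iff_integrableOn_Ioo_of_le hmb.le]
    set C := max ((b-a) ^ (p-1)) ((m-a) ^ (p-1)) with hC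
    have hint : IntegrableOn (fun t => C * (b - t) ^ (q-1)) (Ioo m b) volume := by
      have h0 : IntervalIntegrable (fun x : ℝ => x ^ (q-1)) volume 0 (b - m) :=
        intervalIntegral.intervalIntegrable_rpow' (by linarith)
      have h0' := (h0.comp_mul_left (c := -1)).comp_add_right (-b)
      have h0'' : IntervalIntegrable (fun x : ℝ => (b - x) ^ (q-1)) volume b m := by
        have heq : (fun x : ℝ => ((-1) * (x + -b)) ^ (q-1)) = fun x : ℝ => (b - x) ^ (q-1) := by
          funext x; congr 1; ring
        rw [heq] at h0'
        convert h0' using 2 <;> ring_nf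
      have h0''' := (h0''.symm.const_mul C)
      rwa [intervalIntegrable_iff_integrableOn_Ioo_of_le hmb.le] at h0'''
    apply hint.integrable.mono' ((measurable_betaKer p q a b).aestronglyMeasurable)
    filter_upwards [ae_restrict_mem measurableSet_Ioo] with t ht
    have h1 : 0 < t - a := by linarith [ht.1]
    have h2 : 0 < b - t := by linarith [ht.2]
    rw [Real.norm_eq_abs, abs_of_nonneg (mul_nonneg (Real.rpow_nonneg h1.le _)
      (Real.rpow_nonneg h2.le _))]
    apply mul_le_mul_of_nonneg_right _ (Real.rpow_nonneg h2.le _)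

    rcases le_total 0 (p-1) with hp1 | hp1
    · exact le_max_of_le_left (Real.rpow_le_rpow h1.le (by linarith [ht.2]) hp1)
    · exact le_max_of_le_right (Real.rpow_le_rpow_of_nonpos (by linarith [ht.1])
        (by linarith [ht.1]) hp1)
  exact h1.trans h2

lemma integral_beta01 (hp : 0 < p) (hq : 0 < q) :
    ∫ x in (0:ℝ)..1, x ^ (p-1) * (1-x) ^ (q-1)
      = Real.Gamma p * Real.Gamma q / Real.Gamma (p+q) := by
  have h := Complex.Gamma_mul_Gamma_eq_betaIntegral (s := (p:ℂ)) (t := (q:ℂ))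
    (by simpa using hp) (by simpa using hq)
  have hbeta : Complex.betaIntegral (p:ℂ) (q:ℂ)
      = ((∫ x in (0:ℝ)..1, x ^ (p-1) * (1-x) ^ (q-1) : ℝ) : ℂ) := by
    rw [Complex.betaIntegral, ← intervalIntegral.integral_ofReal]
    apply intervalIntegral.integral_congr
    intro x hx
    rw [uIcc_of_le zero_le_one] at hx
    dsimp only
    rw [Complex.ofReal_mul, Complex.ofReal_cpow hx.1, Complex.ofReal_cpow
      (by linarith [hx.2] : (0:ℝ) ≤ 1 - x)]
    push_cast
    rfl
  rw [hbeta, ← Complex.ofReal_add, Complex.Gamma_ofReal, Complex.Gamma_ofReal,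
    Complex.Gamma_ofReal, ← Complex.ofReal_mul, ← Complex.ofReal_mul] at h
  have h2 := Complex.ofReal_injective h
  have hG : Real.Gamma (p+q) ≠ 0 := ne_of_gt (Real.Gamma_pos_of_pos (by linarith))
  rw [eq_div_iff hG]
  linear_combination -h2

lemma integral_beta (hp : 0 < p) (hq : 0 < q) (hab : a < b) :
    ∫ t in a..b, (t - a) ^ (p-1) * (b - t) ^ (q-1)
      = Real.Gamma p * Real.Gamma q / Real.Gamma (p+q) * (b-a) ^ (p+q-1) := by
  have hba : 0 < b - a := by linarith
  have hsub := intervalIntegral.integral_comp_mul_add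
    (f := fun t => (t - a) ^ (p-1) * (b - t) ^ (q-1)) (a := (0:ℝ)) (b := 1)
    (c := b - a) (ne_of_gt hba) a
  simp only [mul_zero, zero_add, mul_one] at hsub
  rw [show (b - a) + a = b by ring] at hsub
  have heq : ∀ x ∈ uIcc (0:ℝ) 1,
      ((b-a) * x + a - a) ^ (p-1) * (b - ((b-a) * x + a)) ^ (q-1)
        = ((b-a) ^ (p-1) * (b-a) ^ (q-1)) * (x ^ (p-1) * (1-x) ^ (q-1)) := by
    intro x hx
    rw [uIcc_of_le zero_le_one] at hx
    rw [show (b-a) * x + a - a = (b-a) * x by ring,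
      show b - ((b-a) * x + a) = (b-a) * (1-x) by ring,
      Real.mul_rpow hba.le hx.1, Real.mul_rpow hba.le (by linarith [hx.2])]
    ring
  rw [intervalIntegral.integral_congr heq, intervalIntegral.integral_const_mul,
    integral_beta01 hp hq, smul_eq_mul, inv_mul_eq_div, eq_div_iff (ne_of_gt hba)] at hsub
  rw [← hsub]
  have hexp : (b-a) ^ (p-1) * ((b-a) ^ (q-1) * (b-a) ^ (1:ℝ)) = (b-a) ^ (p+q-1) := by
    rw [← Real.rpow_add hba, ← Real.rpow_add hba]
    congr 1; ring
  calc (b-a) ^ (p-1) * (b-a) ^ (q-1) * (Real.Gamma p * Real.Gamma q / Real.Gamma (p+q)) * (b-a)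
      = (Real.Gamma p * Real.Gamma q / Real.Gamma (p+q))
          * ((b-a) ^ (p-1) * ((b-a) ^ (q-1) * (b-a) ^ (1:ℝ))) := by rw [Real.rpow_one]; ring
    _ = Real.Gamma p * Real.Gamma q / Real.Gamma (p+q) * (b-a) ^ (p+q-1) := by rw [hexp]

end Beta

/-- auxiliary kernel `u^{β-1} E_{α,β}(k u^α)`. -/
noncomputable def Sfun (α k β u : ℝ) : ℝ := u ^ (β - 1) * mittagLeffler α β (k * u ^ α)

section Sfun
variable {α k β u L : ℝ}

lemma Sfun_term (hu : 0 < u) (n : ℕ) (K : ℝ) :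
    u ^ (β - 1) * ((K * u ^ α) ^ n / Real.Gamma (α * n + β))
      = K ^ n * u ^ (α * n + β - 1) / Real.Gamma (α * n + β) := by
  rw [mul_pow, ← Real.rpow_natCast (u ^ α) n, ← Real.rpow_mul hu.le]
  rw [show α * (n:ℝ) + β - 1 = (β - 1) + α * n by ring, Real.rpow_add hu]
  ring

lemma Sfun_eq_tsum (hu : 0 < u) :
    Sfun α k β u = ∑' n : ℕ, k ^ n * u ^ (α * n + β - 1) / Real.Gamma (α * n + β) := by
  rw [Sfun, mittagLeffler, ← tsum_mul_left]
  exact tsum_congr fun n => Sfun_term hu n k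

lemma measurable_Sfun (hα : 0 < α) (hα1 : α ≤ 1) (hβ : 0 < β) (k : ℝ) :
    Measurable (Sfun α k β) :=
  (measurable_rpowc (β - 1)).mul
    ((continuous_ml hα hα1 hβ).measurable.comp ((measurable_rpowc α).const_mul k))

lemma continuousAt_Sfun (hα : 0 < α) (hα1 : α ≤ 1) (hβ : 0 < β) (k : ℝ) (hu : 0 < u) :
    ContinuousAt (Sfun α k β) u := by
  apply ContinuousAt.mul
  · exact Real.continuousAt_rpow_const u (β - 1) (Or.inl hu.ne')
  · have hin : ContinuousAt (fun z : ℝ => k * z ^ α) u :=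
      (continuousAt_const).mul (Real.continuousAt_rpow_const u α (Or.inl hu.ne'))
    exact ((continuous_ml hα hα1 hβ).continuousAt).comp hin

lemma Sfun_abs_le (hα : 0 < α) (hα1 : α ≤ 1) (hβ : 0 < β) (hu : 0 < u) (huL : u ≤ L) :
    |Sfun α k β u| ≤ u ^ (β - 1) * mittagLeffler α β (|k| * L ^ α) := by
  rw [Sfun, abs_mul, abs_of_nonneg (Real.rpow_nonneg hu.le _)]
  apply mul_le_mul_of_nonneg_left _ (Real.rpow_nonneg hu.le _)
  apply ml_abs_le hα hα1 hβ
  rw [abs_mul, abs_of_nonneg (Real.rpow_nonneg hu.le _)]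
  exact mul_le_mul_of_nonneg_left (Real.rpow_le_rpow hu.le huL hα.le) (abs_nonneg k)

lemma Sfun_one (hα : 0 < α) (hα1 : α ≤ 1) (u : ℝ) :
    Sfun α k 1 u = 1 + k * Sfun α k (α + 1) u := by
  rw [Sfun, Sfun, ml_one_shift hα hα1]
  rw [show (1:ℝ) - 1 = 0 by ring, Real.rpow_zero, show α + 1 - 1 = α by ring]
  ring

variable {q x b : ℝ}

lemma intervalIntegrable_Sfun_kernel (hα : 0 < α) (hα1 : α ≤ 1) (hβ : 0 < β) (hq : 0 < q)
    (hxb : x < b) (k : ℝ) :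
    IntervalIntegrable (fun t => Sfun α k β (b - t) * (t - x) ^ (q - 1)) volume x b := by
  rw [intervalIntegrable_iff_integrableOn_Ioo_of_le hxb.le]
  set C := mittagLeffler α β (|k| * (b - x) ^ α) with hCdef
  have hint : IntegrableOn (fun t => ((t - x) ^ (q-1) * (b - t) ^ (β-1)) * C) (Ioo x b) volume := by
    have := (intervalIntegrable_beta hq hβ hxb).mul_const C
    rwa [intervalIntegrable_iff_integrableOn_Ioo_of_le hxb.le] at this
  apply hint.integrable.mono'
  · exact (((measurable_Sfun hα hα1 hβ k).comp (measurable_const.sub measurable_id)).mul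
      (measurable_sub_rpow x (q-1))).aestronglyMeasurable
  · filter_upwards [ae_restrict_mem measurableSet_Ioo] with t ht
    have h1 : 0 < b - t := by linarith [ht.2]
    have h2 : 0 < t - x := by linarith [ht.1]
    rw [Real.norm_eq_abs, abs_mul, abs_of_nonneg (Real.rpow_nonneg h2.le _)]
    calc |Sfun α k β (b - t)| * (t - x) ^ (q-1)
        ≤ ((b - t) ^ (β-1) * C) * (t - x) ^ (q-1) := by
          apply mul_le_mul_of_nonneg_right _ (Real.rpow_nonneg h2.le _)
          exact Sfun_abs_le hα hα1 hβ h1 (by linarith [ht.1])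
      _ = ((t - x) ^ (q-1) * (b - t) ^ (β-1)) * C := by ring

lemma integral_Sfun_kernel (hα : 0 < α) (hα1 : α ≤ 1) (hβ : 0 < β) (hq : 0 < q)
    (hxb : x < b) (k : ℝ) :
    ∫ t in x..b, Sfun α k β (b - t) * (t - x) ^ (q - 1)
      = Real.Gamma q * Sfun α k (β + q) (b - x) := by
  have hbx : 0 < b - x := by linarith
  set g : ℕ → ℝ → ℝ := fun n t =>
    (k ^ n / Real.Gamma (α * n + β)) * ((t - x) ^ (q-1) * (b - t) ^ (α * n + β - 1)) with hg
  have hβn : ∀ n : ℕ, (0:ℝ) < α * n + β := fun n => by positivity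
  have hgint : ∀ n, IntegrableOn (g n) (Ioo x b) volume := by
    intro n
    have := (intervalIntegrable_beta hq (hβn n) hxb).const_mul
      (k ^ n / Real.Gamma (α * n + β))
    rwa [intervalIntegrable_iff_integrableOn_Ioo_of_le hxb.le] at this
  have hval : ∀ (K : ℝ) (n : ℕ),
      (∫ t in Ioo x b, (K ^ n / Real.Gamma (α * n + β)) *
          ((t - x) ^ (q-1) * (b - t) ^ (α * n + β - 1)))
        = Real.Gamma q * (K ^ n * (b-x) ^ (α * n + (β+q) - 1) / Real.Gamma (α * n + (β+q))) := by
    intro K n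
    rw [MeasureTheory.integral_const_mul, ← MeasureTheory.integral_Ioc_eq_integral_Ioo,
      ← intervalIntegral.integral_of_le hxb.le, integral_beta hq (hβn n) hxb]
    have e1 : q + (α * n + β) - 1 = α * n + (β + q) - 1 := by ring
    have e2 : q + (α * n + β) = α * n + (β + q) := by ring
    rw [e1, e2]
    have hΓ1 : Real.Gamma (α * n + β) ≠ 0 := (Real.Gamma_pos_of_pos (hβn n)).ne'
    have hΓ2 : Real.Gamma (α * n + (β + q)) ≠ 0 :=
      (Real.Gamma_pos_of_pos (by positivity)).ne'
    field_simp
  have hptwise : ∀ t ∈ Ioo x b, Sfun α k β (b - t) * (t - x) ^ (q-1) = ∑' n, g n t := by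
    intro t ht
    rw [Sfun_eq_tsum (show (0:ℝ) < b - t by linarith [ht.2]), ← tsum_mul_right]
    exact tsum_congr fun n => by rw [hg]; dsimp only; ring
  have hnorm : Summable (fun n => ∫ t in Ioo x b, ‖g n t‖) := by
    have heq : ∀ n : ℕ, (∫ t in Ioo x b, ‖g n t‖)
        = Real.Gamma q * ((b-x) ^ (α * n + (β+q) - 1) * |k| ^ n / Real.Gamma (α * n + (β+q))) := by
      intro n
      have habs : ∀ t ∈ Ioo x b, ‖g n t‖
          = (|k| ^ n / Real.Gamma (α * n + β)) * ((t - x) ^ (q-1) * (b - t) ^ (α * n + β - 1)) := by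
        intro t ht
        have h1 : 0 < b - t := by linarith [ht.2]
        have h2 : 0 < t - x := by linarith [ht.1]
        rw [hg]; dsimp only
        rw [Real.norm_eq_abs, abs_mul, abs_div, abs_pow,
          abs_of_pos (Real.Gamma_pos_of_pos (hβn n)),
          abs_of_nonneg (mul_nonneg (Real.rpow_nonneg h2.le _) (Real.rpow_nonneg h1.le _))]
      rw [MeasureTheory.setIntegral_congr_fun measurableSet_Ioo habs, hval |k| n]
      ring
    apply Summable.congr _ (fun n => (heq n).symm)
    have hbase := (summable_ml hα hα1 (show (0:ℝ) < β + q by positivity)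
      (|k| * (b-x) ^ α)).mul_left (Real.Gamma q * (b-x) ^ ((β+q) - 1))
    apply hbase.congr
    intro n
    have := Sfun_term (α := α) (β := β + q) hbx n |k|
    rw [mul_assoc, this]
    ring
  calc ∫ t in x..b, Sfun α k β (b - t) * (t - x) ^ (q - 1)
      = ∫ t in Ioo x b, Sfun α k β (b - t) * (t - x) ^ (q - 1) := by
        rw [intervalIntegral.integral_of_le hxb.le, MeasureTheory.integral_Ioc_eq_integral_Ioo]
    _ = ∫ t in Ioo x b, ∑' n, g n t :=
        MeasureTheory.setIntegral_congr_fun measurableSet_Ioo hptwise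
    _ = ∑' n, ∫ t in Ioo x b, g n t :=
        (MeasureTheory.integral_tsum_of_summable_integral_norm hgint hnorm).symm
    _ = Real.Gamma q * Sfun α k (β + q) (b - x) := by
        rw [Sfun_eq_tsum hbx, ← tsum_mul_left]
        exact tsum_congr fun n => hval k n

end Sfun

section Sfun2
variable {α k β q u x b : ℝ}

lemma intervalIntegrable_Sfun_kernel' (hα : 0 < α) (hα1 : α ≤ 1) (hβ : 0 < β) (hq : 0 < q)
    (hxb : x < b) (k : ℝ) :
    IntervalIntegrable (fun r => Sfun α k β (r - x) * (b - r) ^ (q - 1)) volume x b := by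
  have h := intervalIntegrable_Sfun_kernel hα hα1 hβ hq hxb k
  have h2 := (h.comp_mul_left (c := -1)).comp_add_right (-(x+b))
  have heq : (fun r : ℝ => Sfun α k β (b - (-1) * (r + -(x+b))) * ((-1) * (r + -(x+b)) - x) ^ (q-1))
      = fun r : ℝ => Sfun α k β (r - x) * (b - r) ^ (q - 1) := by
    funext r
    congr 2 <;> ring
  rw [heq] at h2
  have : IntervalIntegrable (fun r => Sfun α k β (r - x) * (b - r) ^ (q - 1)) volume b x := by
    convert h2 using 2 <;> ring_nf
  exact this.symm

lemma integral_Sfun_kernel' (hα : 0 < α) (hα1 : α ≤ 1) (hβ : 0 < β) (hq : 0 < q)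
    (hxb : x < b) (k : ℝ) :
    ∫ r in x..b, Sfun α k β (r - x) * (b - r) ^ (q - 1)
      = Real.Gamma q * Sfun α k (β + q) (b - x) := by
  have h := intervalIntegral.integral_comp_sub_left (a := x) (b := b)
    (fun r => Sfun α k β (r - x) * (b - r) ^ (q - 1)) (x + b)
  have e1 : x + b - b = x := by ring
  have e2 : x + b - x = b := by ring
  rw [e1, e2] at h
  rw [← h]
  have heq : ∀ t ∈ uIcc x b,
      Sfun α k β (x + b - t - x) * (b - (x + b - t)) ^ (q - 1)
        = Sfun α k β (b - t) * (t - x) ^ (q - 1) := by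
    intro t _
    congr 2 <;> ring
  rw [intervalIntegral.integral_congr heq]
  exact integral_Sfun_kernel hα hα1 hβ hq hxb k

/-- summability of the `Sfun` term series. -/
lemma summable_Sfun_terms (hα : 0 < α) (hα1 : α ≤ 1) (hβ : 0 < β) (hu : 0 < u) (k : ℝ) :
    Summable (fun n : ℕ => k ^ n * u ^ (α * n + β - 1) / Real.Gamma (α * n + β)) :=
  ((summable_ml hα hα1 hβ (k * u ^ α)).mul_left (u ^ (β - 1))).congr
    (fun n => Sfun_term hu n k)

/-- index-shift identity for `Sfun`. -/
lemma Sfun_shift (hα : 0 < α) (hα1 : α ≤ 1) (hβ : 0 < β) (hu : 0 < u) (k : ℝ) :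
    Sfun α k β u = u ^ (β - 1) / Real.Gamma β + k * Sfun α k (β + α) u := by
  rw [Sfun_eq_tsum hu, Sfun_eq_tsum hu,
    Summable.tsum_eq_zero_add (summable_Sfun_terms hα hα1 hβ hu k)]
  congr 1
  · norm_num
  · rw [← tsum_mul_left]
    apply tsum_congr
    intro n
    have e1 : α * ((n:ℝ) + 1) + β - 1 = α * n + (β + α) - 1 := by ring
    have e2 : α * ((n:ℝ) + 1) + β = α * n + (β + α) := by ring
    push_cast
    rw [e1, e2, pow_succ]
    ring

lemma intervalIntegrable_Sfun (hα : 0 < α) (hα1 : α ≤ 1) (hβ : 0 < β) (k : ℝ) {c : ℝ}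
    (hc : 0 < c) : IntervalIntegrable (Sfun α k β) volume 0 c := by
  have h := intervalIntegrable_Sfun_kernel' hα hα1 hβ one_pos (show (0:ℝ) < c from hc) k
  have heq : (fun r : ℝ => Sfun α k β (r - 0) * (c - r) ^ ((1:ℝ) - 1))
      = Sfun α k β := by
    funext r
    rw [sub_zero, sub_self, Real.rpow_zero, mul_one]
  rwa [heq] at h

/-- `∫_0^u Sfun β = Sfun (β+1) u`. -/
lemma integral_Sfun (hα : 0 < α) (hα1 : α ≤ 1) (hβ : 0 < β) (k : ℝ) {u : ℝ} (hu : 0 < u) :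
    ∫ t in (0:ℝ)..u, Sfun α k β t = Sfun α k (β + 1) u := by
  have h := integral_Sfun_kernel' hα hα1 hβ one_pos (show (0:ℝ) < u from hu) k
  rw [Real.Gamma_one, one_mul, sub_zero] at h
  rw [← h]
  apply intervalIntegral.integral_congr
  intro t _
  simp

/-- derivative of `Sfun (β+1)` is `Sfun β` on `(0,∞)`. -/
lemma hasDerivAt_Sfun_succ (hα : 0 < α) (hα1 : α ≤ 1) (hβ : 0 < β) (k : ℝ) {u : ℝ}
    (hu : 0 < u) : HasDerivAt (Sfun α k (β + 1)) (Sfun α k β u) u := by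
  have hFTC : HasDerivAt (fun y => ∫ t in (0:ℝ)..y, Sfun α k β t) (Sfun α k β u) u := by
    apply intervalIntegral.integral_hasDerivAt_right
      (intervalIntegrable_Sfun hα hα1 hβ k hu)
    · exact (measurable_Sfun hα hα1 hβ k).aestronglyMeasurable.stronglyMeasurableAtFilter
    · exact continuousAt_Sfun hα hα1 hβ k hu
  apply hFTC.congr_of_eventuallyEq
  filter_upwards [Ioi_mem_nhds hu] with y hy
  exact (integral_Sfun hα hα1 hβ k hy).symm

end Sfun2

theorem inhomogeneous_right_fracDeriv_solution'
    (α l k b c : ℝ) (hα : 0 < α) (hα1 : α < 1) (hl : 0 < l)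
    (φ : ℝ → ℝ)
    (hφ : ∀ s, φ s = c * ((l - s) ^ (α - 1) * mittagLeffler α α (k * (l - s) ^ α))
        + b * l ^ (α - 2) *
            ∫ t in s..l, (t - s) ^ (α - 1) * mittagLeffler α α (k * (t - s) ^ α)
              * (l - t) ^ (1 - α)) :
    ∀ s ∈ Set.Ioo 0 l,
      (- deriv (fun x => (1 / Real.Gamma (1-α)) * ∫ t in x..l, φ t * (t - x) ^ ((1-α) - 1)) s)
        - k * φ s = b * l ^ (α - 2) * (l - s) ^ (1 - α) := by
  intro s hs
  obtain ⟨hs0, hsl⟩ := hs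
  have hα1' : α ≤ 1 := hα1.le
  have h2α : (0:ℝ) < 2 - α := by linarith
  have h1α : (0:ℝ) < 1 - α := by linarith
  have hΓ1α : Real.Gamma (1-α) ≠ 0 := (Real.Gamma_pos_of_pos h1α).ne'
  have hΓ2α : Real.Gamma (2-α) ≠ 0 := (Real.Gamma_pos_of_pos h2α).ne'
  set D : ℝ := b * l ^ (α - 2) * Real.Gamma (2 - α) with hD
  -- closed form of φ on (0, l)
  have hφc : ∀ t ∈ Ioo (0:ℝ) l, φ t = c * Sfun α k α (l - t) + D * Sfun α k 2 (l - t) := by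
    intro t ht
    rw [hφ t]
    congr 1
    have hmaster := integral_Sfun_kernel' hα hα1' hα h2α ht.2 k
    have hint_eq : (∫ r in t..l, (r - t) ^ (α-1) * mittagLeffler α α (k * (r-t)^α)
          * (l - r) ^ (1-α))
        = ∫ r in t..l, Sfun α k α (r - t) * (l - r) ^ ((2-α) - 1) := by
      apply intervalIntegral.integral_congr
      intro r _
      dsimp only
      rw [show (2:ℝ) - α - 1 = 1 - α from by ring]
      simp only [Sfun]
    rw [hint_eq, hmaster, show α + (2 - α) = 2 from by ring, hD]
    ring
  -- closed form of the fractional integral on (0, l)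
  have hIc : ∀ x ∈ Ioo (0:ℝ) l,
      (1 / Real.Gamma (1-α)) * (∫ t in x..l, φ t * (t - x) ^ ((1-α) - 1))
        = c * Sfun α k 1 (l - x) + D * Sfun α k (3 - α) (l - x) := by
    intro x hx
    have hxl : x < l := hx.2
    have hIoo : ∀ t ∈ Ioo x l, φ t * (t - x) ^ ((1-α) - 1)
        = c * (Sfun α k α (l - t) * (t - x) ^ ((1-α)-1))
          + D * (Sfun α k 2 (l - t) * (t - x) ^ ((1-α)-1)) := by
      intro t ht
      rw [hφc t ⟨lt_trans hx.1 ht.1, ht.2⟩]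
      ring
    have hi1 := intervalIntegrable_Sfun_kernel hα hα1' hα h1α hxl k
    have hi2 := intervalIntegrable_Sfun_kernel hα hα1' (show (0:ℝ) < 2 from by norm_num)
      h1α hxl k
    rw [intervalIntegrable_iff_integrableOn_Ioo_of_le hxl.le] at hi1 hi2
    have v1 : (∫ t in Ioo x l, Sfun α k α (l - t) * (t - x) ^ ((1-α)-1))
        = Real.Gamma (1-α) * Sfun α k (α + (1-α)) (l - x) := by
      rw [← MeasureTheory.integral_Ioc_eq_integral_Ioo, ← intervalIntegral.integral_of_le hxl.le]
      exact integral_Sfun_kernel hα hα1' hα h1α hxl k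
    have v2 : (∫ t in Ioo x l, Sfun α k 2 (l - t) * (t - x) ^ ((1-α)-1))
        = Real.Gamma (1-α) * Sfun α k (2 + (1-α)) (l - x) := by
      rw [← MeasureTheory.integral_Ioc_eq_integral_Ioo, ← intervalIntegral.integral_of_le hxl.le]
      exact integral_Sfun_kernel hα hα1' (show (0:ℝ) < 2 from by norm_num) h1α hxl k
    rw [intervalIntegral.integral_of_le hxl.le, MeasureTheory.integral_Ioc_eq_integral_Ioo,
      MeasureTheory.setIntegral_congr_fun measurableSet_Ioo hIoo,
      MeasureTheory.integral_add (hi1.integrable.const_mul c) (hi2.integrable.const_mul D),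
      MeasureTheory.integral_const_mul, MeasureTheory.integral_const_mul, v1, v2,
      show α + (1-α) = 1 from by ring, show 2 + (1-α) = 3-α from by ring]
    field_simp
  -- derivative of the closed form
  have hls : 0 < l - s := by linarith
  have hinner : HasDerivAt (fun x : ℝ => l - x) (-1) s := by
    simpa using (hasDerivAt_id s).const_sub l
  have hd1 : HasDerivAt (fun x => Sfun α k 1 (l - x)) (-(k * Sfun α k α (l - s))) s := by
    have hstep : HasDerivAt (Sfun α k (α+1)) (Sfun α k α (l - s)) (l - s) :=
      hasDerivAt_Sfun_succ hα hα1' hα k hls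
    have hcomp := HasDerivAt.comp s hstep hinner
    have hR : HasDerivAt (fun x : ℝ => 1 + k * Sfun α k (α+1) (l - x))
        (k * (Sfun α k α (l-s) * -1)) s := by
      exact ((hcomp.const_mul k).const_add 1)
    have hshift : (fun x : ℝ => Sfun α k 1 (l - x)) =ᶠ[𝓝 s]
        (fun x : ℝ => 1 + k * Sfun α k (α+1) (l - x)) := by
      filter_upwards [Ioo_mem_nhds hs0 hsl] with x hx
      have hlx : (0:ℝ) < l - x := by linarith [hx.2]
      rw [Sfun_shift hα hα1' one_pos hlx k, show (1:ℝ) - 1 = 0 from by ring,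
        Real.rpow_zero, Real.Gamma_one, show (1:ℝ) + α = α + 1 from by ring]
      norm_num
    have := hR.congr_of_eventuallyEq hshift
    rw [show -(k * Sfun α k α (l - s)) = k * (Sfun α k α (l - s) * -1) by ring]
    exact this
  have hd2 : HasDerivAt (fun x => Sfun α k (3-α) (l - x)) (-(Sfun α k (2-α) (l - s))) s := by
    have hstep : HasDerivAt (Sfun α k ((2-α)+1)) (Sfun α k (2-α) (l - s)) (l - s) :=
      hasDerivAt_Sfun_succ hα hα1' h2α k hls
    rw [show (2:ℝ)-α+1 = 3-α from by ring] at hstep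
    have hcomp := HasDerivAt.comp s hstep hinner
    rw [show -(Sfun α k (2-α) (l - s)) = Sfun α k (2-α) (l - s) * -1 by ring]
    exact hcomp
  have hF : HasDerivAt (fun x => c * Sfun α k 1 (l - x) + D * Sfun α k (3-α) (l - x))
      (c * -(k * Sfun α k α (l - s)) + D * -(Sfun α k (2-α) (l - s))) s :=
    (hd1.const_mul c).add (hd2.const_mul D)
  have hderivI : deriv (fun x => (1 / Real.Gamma (1-α)) *
        ∫ t in x..l, φ t * (t - x) ^ ((1-α) - 1)) s
      = c * -(k * Sfun α k α (l - s)) + D * -(Sfun α k (2-α) (l - s)) := by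
    have heq : (fun x => (1 / Real.Gamma (1-α)) * ∫ t in x..l, φ t * (t - x) ^ ((1-α) - 1))
        =ᶠ[𝓝 s] fun x => c * Sfun α k 1 (l - x) + D * Sfun α k (3-α) (l - x) := by
      filter_upwards [Ioo_mem_nhds hs0 hsl] with x hx
      exact hIc x hx
    rw [heq.deriv_eq, hF.deriv]
  rw [hderivI, hφc s ⟨hs0, hsl⟩]
  have hkey := Sfun_shift hα hα1' h2α hls k
  rw [show (2:ℝ)-α+α = 2 from by ring, show (2:ℝ)-α-1 = 1-α from by ring] at hkey
  rw [hkey, hD]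
  field_simp
  ring


/-- Solution formula for the inhomogeneous right-sided fractional equation: for
`0 < α < 1`, `l > 0`, `k, b, c ∈ ℝ` and
`φ(s) = c (l-s)^{α-1} E_{α,α}(k(l-s)^α) + b l^{α-2} ∫_s^l (t-s)^{α-1} E_{α,α}(k(t-s)^α) (l-t)^{1-α} dt`,
one has `(D_{l-}^α φ)(s) - k φ(s) = b l^{α-2} (l-s)^{1-α}` for every `s ∈ (0,l)`. -/
theorem inhomogeneous_right_fracDeriv_solution
    (α l k b c : ℝ) (hα : 0 < α) (hα1 : α < 1) (hl : 0 < l)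
    (φ : ℝ → ℝ)
    (hφ : ∀ s, φ s = c * ((l - s) ^ (α - 1) * mittagLeffler α α (k * (l - s) ^ α))
        + b * l ^ (α - 2) *
            ∫ t in s..l, (t - s) ^ (α - 1) * mittagLeffler α α (k * (t - s) ^ α)
              * (l - t) ^ (1 - α)) :
    ∀ s ∈ Set.Ioo 0 l,
      RLDminusR α l φ s - k * φ s = b * l ^ (α - 2) * (l - s) ^ (1 - α) := by
  intro s hs
  exact inhomogeneous_right_fracDeriv_solution' α l k b c hα hα1 hl φ hφ s hs
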